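/- Let C(P_k) be the cone over a path on k vertices (equivalently, the wheel graph on k+2 vertices with one boundary edge deleted). For every k ≥ 1, the number of spanning trees of C(P_k) is F_{2k}, the 2k-th Fibonacci number. -/

import Mathlib

open Matrix

noncomputable section

/-- A finite multigraph without self-loops: each edge `e` has a head and a tail. -/
structure Multigraph where
  V : Type
  E : Type
  fintypeV : Fintype V
  decEqV : DecidableEq V
  fintypeE : Fintype E
  decEqE : DecidableEq E
  head : E → V
  tail : E → V
  loopless : ∀ e, head e ≠ tail e

namespace Multigraph

variable (G : Multigraph)

instance : Fintype G.V := G.fintypeV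
instance : DecidableEq G.V := G.decEqV
instance : Fintype G.E := G.fintypeE
instance : DecidableEq G.E := G.decEqE

/-- `v` and `w` are joined by some edge belonging to `F`. -/
def edgeRel (F : Finset G.E) (v w : G.V) : Prop :=
  ∃ e ∈ F, (G.head e = v ∧ G.tail e = w) ∨ (G.head e = w ∧ G.tail e = v)

/-- Reachability using only edges in `F`. -/
def Reach (F : Finset G.E) : G.V → G.V → Prop :=
  Relation.EqvGen (G.edgeRel F)

/-- The multigraph is connected. -/
def Connected : Prop := ∀ v w : G.V, G.Reach Finset.univ v w

/-- The number of edges joining `v` and `w`. -/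
def edgeCount (v w : G.V) : ℕ :=
  Nat.card {e : G.E // (G.head e = v ∧ G.tail e = w) ∨ (G.head e = w ∧ G.tail e = v)}

/-- The degree of a vertex. -/
def degree (v : G.V) : ℕ :=
  Nat.card {e : G.E // G.head e = v ∨ G.tail e = v}

/-- The Laplacian matrix of the multigraph. -/
def laplacian : Matrix G.V G.V ℤ :=
  Matrix.of fun v w => if v = w then (G.degree v : ℤ) else -(G.edgeCount v w : ℤ)

/-- The reduced Laplacian: delete the row and column of the sink `s`. -/
def reducedLaplacian (s : G.V) : Matrix {v : G.V // v ≠ s} {v : G.V // v ≠ s} ℤ :=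
  Matrix.of fun v w => G.laplacian v.1 w.1

/-- A spanning tree, seen as a set of edges: it connects all vertices and has
`|V| - 1` edges. -/
def IsSpanningTree (T : Finset G.E) : Prop :=
  (∀ v w : G.V, G.Reach T v w) ∧ T.card + 1 = Fintype.card G.V

/-- The number of connected components of the spanning subgraph with edge set `F`. -/
def numComponents (F : Finset G.E) : ℕ :=
  Nat.card (Quotient (Relation.EqvGen.setoid (G.edgeRel F)))

/-- `F` is the edge set of a spanning forest: the number of connected components of
`(V, F)` equals `|V| - |F|` (i.e. `F` is acyclic). -/
def IsForest (F : Finset G.E) : Prop :=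
  G.numComponents F + F.card = Fintype.card G.V

end Multigraph

/-- The cone over the path on `k` vertices: vertex `0` is the cone point, the path
vertices are `1, …, k`; there are `k` spoke edges and `k - 1` path edges. -/
def conePath (k : ℕ) : Multigraph where
  V := Fin (k + 1)
  E := Fin k ⊕ Fin (k - 1)
  fintypeV := inferInstance
  decEqV := inferInstance
  fintypeE := inferInstance
  decEqE := inferInstance
  head := Sum.elim (fun _ => 0) (fun j => ⟨j.1 + 1, by omega⟩)
  tail := Sum.elim (fun i => ⟨i.1 + 1, by omega⟩) (fun j => ⟨j.1 + 2, by omega⟩)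
  loopless := by
    rintro (i | j) <;> simp [Fin.ext_iff]



namespace ConePathAux
open Finset

/-- number of "missing" path edges with index below `i`. -/
def fcnt (P : Finset ℕ) (i : ℕ) : ℕ := ((Finset.range i).filter (fun j => j ∉ P)).card

lemma fcnt_succ (P : Finset ℕ) (j : ℕ) :
    fcnt P (j + 1) = fcnt P j + (if j ∈ P then 0 else 1) := by
  unfold fcnt
  rw [Finset.range_add_one, Finset.filter_insert]
  by_cases h : j ∈ P <;> simp [h, Finset.card_insert_of_notMem]

lemma fcnt_mono (P : Finset ℕ) : Monotone (fcnt P) := by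
  intro a b hab
  exact Finset.card_le_card (Finset.filter_subset_filter _ (by simpa using hab))

lemma fcnt_succ_of_mem {P : Finset ℕ} {j : ℕ} (h : j ∈ P) : fcnt P (j+1) = fcnt P j := by
  simp [fcnt_succ, h]

lemma fcnt_succ_of_not_mem {P : Finset ℕ} {j : ℕ} (h : j ∉ P) : fcnt P (j+1) = fcnt P j + 1 := by
  simp [fcnt_succ, h]

lemma fcnt_congr {P P' : Finset ℕ} {i : ℕ} (h : ∀ j < i, (j ∈ P ↔ j ∈ P')) :
    fcnt P i = fcnt P' i := by
  unfold fcnt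
  congr 1
  apply Finset.filter_congr
  intro j hj
  simp only [Finset.mem_range] at hj
  simp [h j hj]

lemma fcnt_insert_ge {P : Finset ℕ} {m i : ℕ} (h : i ≤ m) :
    fcnt (insert m P) i = fcnt P i :=
  (fcnt_congr (fun j hj => by simp [Nat.ne_of_lt (lt_of_lt_of_le hj h)] )).symm

lemma fcnt_of_subset_range {P : Finset ℕ} {m : ℕ} (h : P ⊆ Finset.range m) :
    fcnt P m = m - P.card := by
  unfold fcnt
  have h2 := Finset.card_filter_add_card_filter_not (s := Finset.range m)
      (p := fun j => j ∈ P)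
  have h3 : (Finset.range m).filter (fun j => j ∈ P) = P := by
    apply Finset.Subset.antisymm
    · intro x hx; exact (Finset.mem_filter.mp hx).2
    · intro x hx; exact Finset.mem_filter.mpr ⟨h hx, hx⟩
  rw [h3, Finset.card_range] at h2
  omega

lemma fcnt_image_range {P : Finset ℕ} {k : ℕ} (hk : 1 ≤ k) :
    (Finset.range k).image (fcnt P) = Finset.range (fcnt P (k-1) + 1) := by
  induction k with
  | zero => omega
  | succ n ih =>
    rcases Nat.eq_or_lt_of_le hk with h1 | h1
    · simp [← h1, fcnt]
    · have hn : 1 ≤ n := by omega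
      rw [Finset.range_add_one, Finset.image_insert, ih hn]
      have hstep := fcnt_succ P (n-1)
      have hn1 : n - 1 + 1 = n := by omega
      rw [hn1] at hstep
      simp only [Nat.add_sub_cancel]
      by_cases h : n - 1 ∈ P
      · simp only [h, if_pos] at hstep
        rw [hstep]
        simp only [add_zero]
        rw [Finset.insert_eq_self.mpr]
        simp [hstep]
      · simp only [h, if_neg, not_false_iff] at hstep
        rw [hstep]
        ext x
        simp only [Finset.mem_insert, Finset.mem_range]
        omega

end ConePathAux

namespace ConePathAux
open Finset

def goodPair (k : ℕ) (S P : Finset ℕ) : Prop :=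
  ∀ i ∈ Finset.range k, ((S.filter fun i' => fcnt P i' = fcnt P i).card) = 1

def badPair (k : ℕ) (S P : Finset ℕ) : Prop :=
  ∀ i ∈ Finset.range k, ((S.filter fun i' => fcnt P i' = fcnt P i).card) =
    (if fcnt P i = fcnt P (k-1) then 0 else 1)

instance (k : ℕ) (S P : Finset ℕ) : Decidable (goodPair k S P) := by
  unfold goodPair; infer_instance

instance (k : ℕ) (S P : Finset ℕ) : Decidable (badPair k S P) := by
  unfold badPair; infer_instance

def goodSet (k : ℕ) : Finset (Finset ℕ × Finset ℕ) :=
  ((Finset.range k).powerset ×ˢ (Finset.range (k-1)).powerset).filter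
    (fun p => goodPair k p.1 p.2)

def badSet (k : ℕ) : Finset (Finset ℕ × Finset ℕ) :=
  ((Finset.range k).powerset ×ˢ (Finset.range (k-1)).powerset).filter
    (fun p => badPair k p.1 p.2)

lemma fcnt_lt_top {P : Finset ℕ} {n : ℕ} (hn : 1 ≤ n) (hP : n - 1 ∉ P) {i : ℕ}
    (hi : i < n) : fcnt P i < fcnt P n := by
  have h1 : fcnt P i ≤ fcnt P (n-1) := fcnt_mono P (by omega)
  have h2 : fcnt P ((n-1)+1) = fcnt P (n-1) + 1 := fcnt_succ_of_not_mem hP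
  have h3 : n - 1 + 1 = n := by omega
  rw [h3] at h2
  omega

-- case (a1)
lemma good_a1 {n : ℕ} (hn : 1 ≤ n) {S P : Finset ℕ} (hS : S ⊆ Finset.range n)
    (hP : P ⊆ Finset.range (n-1)) :
    goodPair (n+1) (insert n S) P ↔ goodPair n S P := by
  have hnP : n - 1 ∉ P := fun h => by simpa using Nat.lt_irrefl (n-1) (by
    have := Finset.mem_range.mp (hP h); omega)
  have hfilt : ∀ i < n, (insert n S).filter (fun i' => fcnt P i' = fcnt P i)
      = S.filter (fun i' => fcnt P i' = fcnt P i) := by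
    intro i hi
    rw [Finset.filter_insert, if_neg]
    exact fun h => absurd h (Nat.ne_of_gt (fcnt_lt_top hn hnP hi))
  constructor
  · intro hg i hi
    have hi' := Finset.mem_range.mp hi
    have := hg i (Finset.mem_range.mpr (by omega))
    rwa [hfilt i hi'] at this
  · intro hg i hi
    have hi' := Finset.mem_range.mp hi
    rcases Nat.lt_succ_iff_lt_or_eq.mp hi' with h | h
    · rw [hfilt i h]; exact hg i (Finset.mem_range.mpr h)
    · subst h
      rw [Finset.filter_insert, if_pos rfl]
      rw [Finset.filter_false_of_mem, Finset.card_insert_of_notMem (by simp)]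
      · simp
      · intro x hx
        exact Nat.ne_of_lt (fcnt_lt_top hn hnP (Finset.mem_range.mp (hS hx)))

-- case (a2)
lemma bad_a2 {n : ℕ} (hn : 1 ≤ n) {S P : Finset ℕ} (hS : S ⊆ Finset.range n)
    (hP : P ⊆ Finset.range (n-1)) :
    badPair (n+1) S P ↔ goodPair n S P := by
  have hnP : n - 1 ∉ P := fun h => by
    have := Finset.mem_range.mp (hP h); omega
  constructor
  · intro hb i hi
    have hi' := Finset.mem_range.mp hi
    have := hb i (Finset.mem_range.mpr (by omega))
    rw [if_neg] at this
    · exact this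
    · simp only [Nat.add_sub_cancel]
      exact Nat.ne_of_lt (fcnt_lt_top hn hnP hi')
  · intro hg i hi
    have hi' := Finset.mem_range.mp hi
    simp only [Nat.add_sub_cancel]
    rcases Nat.lt_succ_iff_lt_or_eq.mp hi' with h | h
    · rw [if_neg (Nat.ne_of_lt (fcnt_lt_top hn hnP h))]
      exact hg i (Finset.mem_range.mpr h)
    · subst h
      rw [if_pos rfl, Finset.card_eq_zero, Finset.filter_false_of_mem]
      intro x hx
      exact Nat.ne_of_lt (fcnt_lt_top hn hnP (Finset.mem_range.mp (hS hx)))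

end ConePathAux

namespace ConePathAux
open Finset

section bcases
variable {n : ℕ} {S P : Finset ℕ}

lemma filter_fcnt_insert (hn : 1 ≤ n) (hS : S ⊆ Finset.range n) (v : ℕ) :
    S.filter (fun i' => fcnt (insert (n-1) P) i' = v)
      = S.filter (fun i' => fcnt P i' = v) := by
  apply Finset.filter_congr
  intro x hx
  have hx' : x ≤ n - 1 := by have := Finset.mem_range.mp (hS hx); omega
  rw [fcnt_insert_ge hx']

lemma fcnt_insert_lt (hn : 1 ≤ n) {i : ℕ} (hi : i < n) :
    fcnt (insert (n-1) P) i = fcnt P i := fcnt_insert_ge (by omega)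

lemma fcnt_insert_top (hn : 1 ≤ n) :
    fcnt (insert (n-1) P) n = fcnt P (n-1) := by
  have h1 : fcnt (insert (n-1) P) ((n-1)+1) = fcnt (insert (n-1) P) (n-1) :=
    fcnt_succ_of_mem (Finset.mem_insert_self _ _)
  have h2 : n - 1 + 1 = n := by omega
  rw [h2] at h1
  rw [h1, fcnt_insert_ge (le_refl _)]

-- case (b1)
lemma good_b1 (hn : 1 ≤ n) (hS : S ⊆ Finset.range n) :
    goodPair (n+1) (insert n S) (insert (n-1) P) ↔ badPair n S P := by
  have hnS : n ∉ S := fun h => by simpa using Finset.mem_range.mp (hS h)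
  constructor
  · intro hg i hi
    have hi' := Finset.mem_range.mp hi
    have := hg i (Finset.mem_range.mpr (by omega))
    rw [Finset.filter_insert] at this
    rw [fcnt_insert_top hn, fcnt_insert_lt hn hi', filter_fcnt_insert hn hS] at this
    by_cases h : fcnt P i = fcnt P (n-1)
    · rw [if_pos h.symm, Finset.card_insert_of_notMem (fun hc => hnS (Finset.mem_filter.mp hc).1)] at this
      rw [if_pos h]
      omega
    · rw [if_neg (fun hc => h hc.symm)] at this
      rw [if_neg h]
      exact this
  · intro hb i hi
    have hi' := Finset.mem_range.mp hi
    rw [Finset.filter_insert]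
    rcases Nat.lt_succ_iff_lt_or_eq.mp hi' with h | h
    · rw [fcnt_insert_top hn, fcnt_insert_lt hn h, filter_fcnt_insert hn hS]
      have := hb i (Finset.mem_range.mpr h)
      by_cases hc : fcnt P i = fcnt P (n-1)
      · rw [if_pos hc.symm, Finset.card_insert_of_notMem (fun hx => hnS (Finset.mem_filter.mp hx).1)]
        rw [if_pos hc] at this
        omega
      · rw [if_neg (fun hx => hc hx.symm)]
        rwa [if_neg hc] at this
    · subst h
      rw [if_pos rfl, fcnt_insert_top hn, filter_fcnt_insert hn hS]
      rw [Finset.card_insert_of_notMem (fun hx => hnS (Finset.mem_filter.mp hx).1)]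
      have := hb (i-1) (Finset.mem_range.mpr (by omega))
      rw [if_pos rfl] at this
      omega

-- case (b2), good
lemma good_b2 (hn : 1 ≤ n) (hS : S ⊆ Finset.range n) :
    goodPair (n+1) S (insert (n-1) P) ↔ goodPair n S P := by
  constructor
  · intro hg i hi
    have hi' := Finset.mem_range.mp hi
    have := hg i (Finset.mem_range.mpr (by omega))
    rwa [fcnt_insert_lt hn hi', filter_fcnt_insert hn hS] at this
  · intro hg i hi
    have hi' := Finset.mem_range.mp hi
    rcases Nat.lt_succ_iff_lt_or_eq.mp hi' with h | h
    · rw [fcnt_insert_lt hn h, filter_fcnt_insert hn hS]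
      exact hg i (Finset.mem_range.mpr h)
    · subst h
      rw [fcnt_insert_top hn, filter_fcnt_insert hn hS]
      exact hg (i-1) (Finset.mem_range.mpr (by omega))

-- case (b2), bad
lemma bad_b2 (hn : 1 ≤ n) (hS : S ⊆ Finset.range n) :
    badPair (n+1) S (insert (n-1) P) ↔ badPair n S P := by
  have htop : fcnt (insert (n-1) P) ((n+1)-1) = fcnt P (n-1) := by
    simpa using fcnt_insert_top (P := P) hn
  constructor
  · intro hb i hi
    have hi' := Finset.mem_range.mp hi
    have := hb i (Finset.mem_range.mpr (by omega))
    rwa [htop, fcnt_insert_lt hn hi', filter_fcnt_insert hn hS] at this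
  · intro hb i hi
    have hi' := Finset.mem_range.mp hi
    rw [htop]
    rcases Nat.lt_succ_iff_lt_or_eq.mp hi' with h | h
    · rw [fcnt_insert_lt hn h, filter_fcnt_insert hn hS]
      exact hb i (Finset.mem_range.mpr h)
    · subst h
      rw [fcnt_insert_top hn, filter_fcnt_insert hn hS, if_pos rfl]
      have := hb (i-1) (Finset.mem_range.mpr (by omega))
      rwa [if_pos rfl] at this
      
-- impossibility: good with neither n ∈ S' nor n-1 ∈ P'
lemma not_good_none (hn : 1 ≤ n) (hS : S ⊆ Finset.range n)
    (hP : P ⊆ Finset.range (n-1)) : ¬ goodPair (n+1) S P := by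
  have hnP : n - 1 ∉ P := fun h => by
    have := Finset.mem_range.mp (hP h); omega
  intro hg
  have := hg n (Finset.mem_range.mpr (by omega))
  rw [Finset.filter_false_of_mem, Finset.card_empty] at this
  · exact absurd this (by omega)
  · intro x hx
    exact Nat.ne_of_lt (fcnt_lt_top hn hnP (Finset.mem_range.mp (hS hx)))

-- impossibility: bad with n ∈ S'
lemma not_bad_insert (hn : 1 ≤ n) (P' : Finset ℕ) :
    ¬ badPair (n+1) (insert n S) P' := by
  intro hb
  have := hb n (Finset.mem_range.mpr (by omega))
  rw [if_pos (by simp)] at this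
  rw [Finset.card_eq_zero, Finset.filter_eq_empty_iff] at this
  exact this (Finset.mem_insert_self _ _) rfl

end bcases
end ConePathAux

namespace ConePathAux
open Finset

lemma mem_goodSet {k : ℕ} {q : Finset ℕ × Finset ℕ} :
    q ∈ goodSet k ↔ q.1 ⊆ Finset.range k ∧ q.2 ⊆ Finset.range (k-1) ∧ goodPair k q.1 q.2 := by
  simp [goodSet, Finset.mem_filter, Finset.mem_product, and_assoc]

lemma mem_badSet {k : ℕ} {q : Finset ℕ × Finset ℕ} :
    q ∈ badSet k ↔ q.1 ⊆ Finset.range k ∧ q.2 ⊆ Finset.range (k-1) ∧ badPair k q.1 q.2 := by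
  simp [badSet, Finset.mem_filter, Finset.mem_product, and_assoc]

section step
variable {n : ℕ}

lemma goodSet_succ_eq (hn : 1 ≤ n) :
    goodSet (n+1) =
      ((goodSet n).image (fun p => (insert n p.1, p.2)) ∪
        (badSet n).image (fun p => (insert n p.1, insert (n-1) p.2))) ∪
        (goodSet n).image (fun p => (p.1, insert (n-1) p.2)) := by
  ext q
  simp only [Finset.mem_union, Finset.mem_image, mem_goodSet, mem_badSet]
  constructor
  · rintro ⟨hS, hP, hg⟩
    simp only [Nat.add_sub_cancel] at hP
    by_cases h1 : n ∈ q.1 <;> by_cases h2 : n - 1 ∈ q.2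
    · left; right
      refine ⟨(q.1.erase n, q.2.erase (n-1)), ⟨?_, ?_, ?_⟩, ?_⟩
      · intro x hx
        have := Finset.mem_range.mp (hS (Finset.mem_of_mem_erase hx))
        have := Finset.ne_of_mem_erase hx
        exact Finset.mem_range.mpr (by omega)
      · intro x hx
        have := Finset.mem_range.mp (hP (Finset.mem_of_mem_erase hx))
        have := Finset.ne_of_mem_erase hx
        exact Finset.mem_range.mpr (by omega)
      · rw [← good_b1 hn (S := q.1.erase n) (P := q.2.erase (n-1))
          (fun x hx => by
            have := Finset.mem_range.mp (hS (Finset.mem_of_mem_erase hx))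
            have := Finset.ne_of_mem_erase hx
            exact Finset.mem_range.mpr (by omega))]
        rwa [Finset.insert_erase h1, Finset.insert_erase h2]
      · rw [Finset.insert_erase h1, Finset.insert_erase h2]
    · left; left
      have hP' : q.2 ⊆ Finset.range (n-1) := by
        intro x hx
        have := Finset.mem_range.mp (hP hx)
        have : x ≠ n - 1 := fun hc => h2 (hc ▸ hx)
        exact Finset.mem_range.mpr (by omega)
      have hS' : q.1.erase n ⊆ Finset.range n := by
        intro x hx
        have := Finset.mem_range.mp (hS (Finset.mem_of_mem_erase hx))
        have := Finset.ne_of_mem_erase hx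
        exact Finset.mem_range.mpr (by omega)
      refine ⟨(q.1.erase n, q.2), ⟨hS', hP', ?_⟩, ?_⟩
      · rw [← good_a1 hn hS' hP']
        rwa [Finset.insert_erase h1]
      · rw [Finset.insert_erase h1]
    · right
      have hS' : q.1 ⊆ Finset.range n := by
        intro x hx
        have := Finset.mem_range.mp (hS hx)
        have : x ≠ n := fun hc => h1 (hc ▸ hx)
        exact Finset.mem_range.mpr (by omega)
      refine ⟨(q.1, q.2.erase (n-1)), ⟨hS', ?_, ?_⟩, ?_⟩
      · intro x hx
        have := Finset.mem_range.mp (hP (Finset.mem_of_mem_erase hx))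
        have := Finset.ne_of_mem_erase hx
        exact Finset.mem_range.mpr (by omega)
      · rw [← good_b2 hn hS']
        rwa [Finset.insert_erase h2]
      · rw [Finset.insert_erase h2]
    · exfalso
      have hS' : q.1 ⊆ Finset.range n := by
        intro x hx
        have := Finset.mem_range.mp (hS hx)
        have : x ≠ n := fun hc => h1 (hc ▸ hx)
        exact Finset.mem_range.mpr (by omega)
      have hP' : q.2 ⊆ Finset.range (n-1) := by
        intro x hx
        have := Finset.mem_range.mp (hP hx)
        have : x ≠ n - 1 := fun hc => h2 (hc ▸ hx)
        exact Finset.mem_range.mpr (by omega)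
      exact not_good_none hn hS' hP' hg
  · rintro ((⟨p, ⟨hS, hP, hg⟩, rfl⟩ | ⟨p, ⟨hS, hP, hb⟩, rfl⟩) | ⟨p, ⟨hS, hP, hg⟩, rfl⟩)
    · refine ⟨?_, ?_, (good_a1 hn hS hP).mpr hg⟩
      · intro x hx
        rcases Finset.mem_insert.mp hx with h | h
        · exact Finset.mem_range.mpr (by omega)
        · have := Finset.mem_range.mp (hS h); exact Finset.mem_range.mpr (by omega)
      · simp only [Nat.add_sub_cancel]
        exact hP.trans (by intro x hx; have := Finset.mem_range.mp hx; exact Finset.mem_range.mpr (by omega))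
    · refine ⟨?_, ?_, (good_b1 hn hS).mpr hb⟩
      · intro x hx
        rcases Finset.mem_insert.mp hx with h | h
        · exact Finset.mem_range.mpr (by omega)
        · have := Finset.mem_range.mp (hS h); exact Finset.mem_range.mpr (by omega)
      · simp only [Nat.add_sub_cancel]
        intro x hx
        rcases Finset.mem_insert.mp hx with h | h
        · exact Finset.mem_range.mpr (by omega)
        · have := Finset.mem_range.mp (hP h); exact Finset.mem_range.mpr (by omega)
    · refine ⟨?_, ?_, (good_b2 hn hS).mpr hg⟩
      · exact hS.trans (by intro x hx; have := Finset.mem_range.mp hx; exact Finset.mem_range.mpr (by omega))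
      · simp only [Nat.add_sub_cancel]
        intro x hx
        rcases Finset.mem_insert.mp hx with h | h
        · exact Finset.mem_range.mpr (by omega)
        · have := Finset.mem_range.mp (hP h); exact Finset.mem_range.mpr (by omega)

end step
end ConePathAux

namespace ConePathAux
open Finset

section step2
variable {n : ℕ}

lemma badSet_succ_eq (hn : 1 ≤ n) :
    badSet (n+1) = goodSet n ∪ (badSet n).image (fun p => (p.1, insert (n-1) p.2)) := by
  ext q
  simp only [Finset.mem_union, Finset.mem_image, mem_goodSet, mem_badSet]
  constructor
  · rintro ⟨hS, hP, hb⟩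
    simp only [Nat.add_sub_cancel] at hP
    have h1 : n ∉ q.1 := by
      intro h1
      have : q.1 = insert n (q.1.erase n) := (Finset.insert_erase h1).symm
      rw [this] at hb
      exact not_bad_insert hn q.2 hb
    have hS' : q.1 ⊆ Finset.range n := by
      intro x hx
      have := Finset.mem_range.mp (hS hx)
      have : x ≠ n := fun hc => h1 (hc ▸ hx)
      exact Finset.mem_range.mpr (by omega)
    by_cases h2 : n - 1 ∈ q.2
    · right
      refine ⟨(q.1, q.2.erase (n-1)), ⟨hS', ?_, ?_⟩, ?_⟩
      · intro x hx
        have := Finset.mem_range.mp (hP (Finset.mem_of_mem_erase hx))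
        have := Finset.ne_of_mem_erase hx
        exact Finset.mem_range.mpr (by omega)
      · rw [← bad_b2 hn hS']
        rwa [Finset.insert_erase h2]
      · rw [Finset.insert_erase h2]
    · left
      have hP' : q.2 ⊆ Finset.range (n-1) := by
        intro x hx
        have := Finset.mem_range.mp (hP hx)
        have : x ≠ n - 1 := fun hc => h2 (hc ▸ hx)
        exact Finset.mem_range.mpr (by omega)
      exact ⟨hS', hP', (bad_a2 hn hS' hP').mp hb⟩
  · rintro (⟨hS, hP, hg⟩ | ⟨p, ⟨hS, hP, hb⟩, rfl⟩)
    · refine ⟨hS.trans ?_, ?_, (bad_a2 hn hS hP).mpr hg⟩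
      · intro x hx; have := Finset.mem_range.mp hx; exact Finset.mem_range.mpr (by omega)
      · simp only [Nat.add_sub_cancel]
        exact hP.trans (by intro x hx; have := Finset.mem_range.mp hx; exact Finset.mem_range.mpr (by omega))
    · refine ⟨hS.trans ?_, ?_, (bad_b2 hn hS).mpr hb⟩
      · intro x hx; have := Finset.mem_range.mp hx; exact Finset.mem_range.mpr (by omega)
      · simp only [Nat.add_sub_cancel]
        intro x hx
        rcases Finset.mem_insert.mp hx with h | h
        · exact Finset.mem_range.mpr (by omega)
        · have := Finset.mem_range.mp (hP h); exact Finset.mem_range.mpr (by omega)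

lemma insert_injOn_good (hn : 1 ≤ n) :
    ∀ p ∈ goodSet n, ∀ q ∈ goodSet n,
      (insert n p.1, p.2) = (insert n q.1, q.2) → p = q := by
  rintro p hp q hq h
  rw [mem_goodSet] at hp hq
  simp only [Prod.mk.injEq] at h
  obtain ⟨h1, h2⟩ := h
  have hnp : n ∉ p.1 := fun hc => by have := Finset.mem_range.mp (hp.1 hc); omega
  have hnq : n ∉ q.1 := fun hc => by have := Finset.mem_range.mp (hq.1 hc); omega
  have : p.1 = q.1 := by
    rw [← Finset.erase_insert hnp, ← Finset.erase_insert hnq, h1]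
  exact Prod.ext this h2

lemma goodSet_card_succ (hn : 1 ≤ n) :
    (goodSet (n+1)).card = 2 * (goodSet n).card + (badSet n).card := by
  rw [goodSet_succ_eq hn]
  have hinj1 : Set.InjOn (fun p : Finset ℕ × Finset ℕ => (insert n p.1, p.2)) (goodSet n) := by
    intro p hp q hq h
    exact insert_injOn_good hn p (by simpa using hp) q (by simpa using hq) h
  have memS : ∀ {s : Finset (Finset ℕ × Finset ℕ)} {k : ℕ},
      s = goodSet k ∨ s = badSet k → ∀ p ∈ s, p.1 ⊆ Finset.range k ∧ p.2 ⊆ Finset.range (k-1) := by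
    rintro s k (rfl | rfl) p hp
    · exact ⟨(mem_goodSet.mp hp).1, (mem_goodSet.mp hp).2.1⟩
    · exact ⟨(mem_badSet.mp hp).1, (mem_badSet.mp hp).2.1⟩
  have hinj2 : Set.InjOn (fun p : Finset ℕ × Finset ℕ => (insert n p.1, insert (n-1) p.2))
      (badSet n) := by
    intro p hp q hq h
    simp only [Finset.coe_mem, Finset.mem_coe] at hp hq
    obtain ⟨hp1, hp2⟩ := memS (Or.inr rfl) p hp
    obtain ⟨hq1, hq2⟩ := memS (Or.inr rfl) q hq
    simp only [Prod.mk.injEq] at h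
    obtain ⟨h1, h2⟩ := h
    have hnp : n ∉ p.1 := fun hc => by have := Finset.mem_range.mp (hp1 hc); omega
    have hnq : n ∉ q.1 := fun hc => by have := Finset.mem_range.mp (hq1 hc); omega
    have hmp : n - 1 ∉ p.2 := fun hc => by have := Finset.mem_range.mp (hp2 hc); omega
    have hmq : n - 1 ∉ q.2 := fun hc => by have := Finset.mem_range.mp (hq2 hc); omega
    refine Prod.ext ?_ ?_
    · rw [← Finset.erase_insert hnp, ← Finset.erase_insert hnq, h1]
    · rw [← Finset.erase_insert hmp, ← Finset.erase_insert hmq, h2]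
  have hinj3 : Set.InjOn (fun p : Finset ℕ × Finset ℕ => (p.1, insert (n-1) p.2))
      (goodSet n) := by
    intro p hp q hq h
    simp only [Finset.mem_coe] at hp hq
    obtain ⟨hp1, hp2⟩ := memS (Or.inl rfl) p hp
    obtain ⟨hq1, hq2⟩ := memS (Or.inl rfl) q hq
    simp only [Prod.mk.injEq] at h
    obtain ⟨h1, h2⟩ := h
    have hmp : n - 1 ∉ p.2 := fun hc => by have := Finset.mem_range.mp (hp2 hc); omega
    have hmq : n - 1 ∉ q.2 := fun hc => by have := Finset.mem_range.mp (hq2 hc); omega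
    refine Prod.ext h1 ?_
    rw [← Finset.erase_insert hmp, ← Finset.erase_insert hmq, h2]
  have hd1 : Disjoint ((goodSet n).image (fun p => (insert n p.1, p.2)))
      ((badSet n).image (fun p => (insert n p.1, insert (n-1) p.2))) := by
    rw [Finset.disjoint_left]
    rintro q hq1 hq2
    simp only [Finset.mem_image] at hq1 hq2
    obtain ⟨p, hp, rfl⟩ := hq1
    obtain ⟨r, hr, hqr⟩ := hq2
    obtain ⟨hp1, hp2⟩ := memS (Or.inl rfl) p hp
    have : n - 1 ∈ p.2 := by
      have := congrArg Prod.snd hqr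
      simp only at this
      rw [← this]; exact Finset.mem_insert_self _ _
    have := Finset.mem_range.mp (hp2 this); omega
  have hd2 : Disjoint (((goodSet n).image (fun p => (insert n p.1, p.2))) ∪
        ((badSet n).image (fun p => (insert n p.1, insert (n-1) p.2))))
      ((goodSet n).image (fun p => (p.1, insert (n-1) p.2))) := by
    rw [Finset.disjoint_left]
    rintro q hq1 hq2
    simp only [Finset.mem_union, Finset.mem_image] at hq1 hq2
    obtain ⟨r, hr, hqr⟩ := hq2
    obtain ⟨hr1, hr2⟩ := memS (Or.inl rfl) r hr
    have hnq : n ∉ q.1 := by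
      have := congrArg Prod.fst hqr
      simp only at this
      rw [← this]
      intro hc
      have := Finset.mem_range.mp (hr1 hc); omega
    rcases hq1 with ⟨p, hp, hqp⟩ | ⟨p, hp, hqp⟩ <;>
    · apply hnq
      have := congrArg Prod.fst hqp
      simp only at this
      rw [← this]
      exact Finset.mem_insert_self _ _
  rw [Finset.card_union_of_disjoint hd2, Finset.card_union_of_disjoint hd1,
    Finset.card_image_of_injOn hinj1, Finset.card_image_of_injOn hinj2,
    Finset.card_image_of_injOn hinj3]
  ring

lemma badSet_card_succ (hn : 1 ≤ n) :
    (badSet (n+1)).card = (goodSet n).card + (badSet n).card := by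
  rw [badSet_succ_eq hn]
  have hinj : Set.InjOn (fun p : Finset ℕ × Finset ℕ => (p.1, insert (n-1) p.2)) (badSet n) := by
    intro p hp q hq h
    simp only [Finset.mem_coe] at hp hq
    have hp2 := (mem_badSet.mp hp).2.1
    have hq2 := (mem_badSet.mp hq).2.1
    simp only [Prod.mk.injEq] at h
    obtain ⟨h1, h2⟩ := h
    have hmp : n - 1 ∉ p.2 := fun hc => by have := Finset.mem_range.mp (hp2 hc); omega
    have hmq : n - 1 ∉ q.2 := fun hc => by have := Finset.mem_range.mp (hq2 hc); omega
    refine Prod.ext h1 ?_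
    rw [← Finset.erase_insert hmp, ← Finset.erase_insert hmq, h2]
  have hd : Disjoint (goodSet n) ((badSet n).image (fun p => (p.1, insert (n-1) p.2))) := by
    rw [Finset.disjoint_left]
    intro q hq1 hq2
    simp only [Finset.mem_image] at hq2
    obtain ⟨p, hp, hqp⟩ := hq2
    have hq2' := (mem_goodSet.mp hq1).2.1
    have : n - 1 ∈ q.2 := by
      have := congrArg Prod.snd hqp
      simp only at this
      rw [← this]; exact Finset.mem_insert_self _ _
    have := Finset.mem_range.mp (hq2' this); omega
  rw [Finset.card_union_of_disjoint hd, Finset.card_image_of_injOn hinj]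

end step2
end ConePathAux

namespace ConePathAux
open Finset

lemma goodSet_one : goodSet 1 = {({0}, ∅)} := by
  ext q
  rw [mem_goodSet, Finset.mem_singleton]
  constructor
  · rintro ⟨hS, hP, hg⟩
    have hP' : q.2 = ∅ := Finset.subset_empty.mp (by simpa using hP)
    have h0 := hg 0 (by simp)
    rw [Finset.range_one] at hS
    rcases Finset.subset_singleton_iff.mp hS with h | h
    · rw [h] at h0; simp at h0
    · rw [Prod.ext_iff]; exact ⟨h, hP'⟩
  · rintro rfl
    refine ⟨by simp, by simp, ?_⟩
    intro i hi
    simp only [Finset.mem_range, Nat.lt_one_iff] at hi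
    subst hi
    rw [Finset.filter_true_of_mem (by intro x hx; simp at hx; rw [hx])]
    simp

lemma badSet_one : badSet 1 = {(∅, ∅)} := by
  ext q
  rw [mem_badSet, Finset.mem_singleton]
  constructor
  · rintro ⟨hS, hP, hb⟩
    have hP' : q.2 = ∅ := Finset.subset_empty.mp (by simpa using hP)
    have h0 := hb 0 (by simp)
    rw [if_pos rfl, Finset.card_eq_zero] at h0
    rw [Finset.range_one] at hS
    rcases Finset.subset_singleton_iff.mp hS with h | h
    · rw [Prod.ext_iff]; exact ⟨h, hP'⟩
    · rw [h] at h0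
      rw [Finset.filter_true_of_mem (by intro x hx; simp at hx; rw [hx])] at h0
      simp at h0
  · rintro rfl
    refine ⟨by simp, by simp, ?_⟩
    intro i hi
    simp only [Finset.mem_range, Nat.lt_one_iff] at hi
    subst hi
    simp

lemma counts {n : ℕ} (hn : 1 ≤ n) :
    (goodSet n).card = Nat.fib (2*n) ∧ (badSet n).card = Nat.fib (2*n - 1) := by
  induction n, hn using Nat.le_induction with
  | base => rw [goodSet_one, badSet_one]; simp
  | succ n hn ih =>
    rw [goodSet_card_succ hn, badSet_card_succ hn, ih.1, ih.2]
    have e1 : Nat.fib (2*(n+1)) = Nat.fib (2*n) + Nat.fib (2*n+1) := by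
      rw [show 2*(n+1) = 2*n+2 from by ring, Nat.fib_add_two]
    have e2 : Nat.fib (2*n+1) = Nat.fib (2*n-1) + Nat.fib (2*n) := by
      have h : 2*n - 1 + 2 = 2*n + 1 := by omega
      rw [← h, Nat.fib_add_two]
      congr 2
      omega
    have h3 : 2*(n+1) - 1 = 2*n + 1 := by omega
    rw [h3]
    omega

end ConePathAux


section GraphSide
open Finset ConePathAux

variable {k : ℕ}

/-- The spoke indices of an edge set. -/
def Sof (T : Finset ((conePath k).E)) : Finset ℕ :=
  T.toLeft.map Fin.valEmbedding

/-- The path-edge indices of an edge set. -/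
def Pof (T : Finset ((conePath k).E)) : Finset ℕ :=
  T.toRight.map Fin.valEmbedding

lemma mem_Sof {T : Finset ((conePath k).E)} {a : ℕ} :
    a ∈ Sof T ↔ ∃ h : a < k, Sum.inl ⟨a, h⟩ ∈ T := by
  unfold Sof
  simp only [Finset.mem_map, Finset.mem_toLeft, Fin.valEmbedding_apply]
  constructor
  · rintro ⟨x, hx, rfl⟩
    exact ⟨x.2, Finset.mem_toLeft.mp hx⟩
  · rintro ⟨h, hx⟩
    exact ⟨⟨a, h⟩, Finset.mem_toLeft.mpr hx, rfl⟩

lemma mem_Pof {T : Finset ((conePath k).E)} {a : ℕ} :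
    a ∈ Pof T ↔ ∃ h : a < k - 1, Sum.inr ⟨a, h⟩ ∈ T := by
  unfold Pof
  simp only [Finset.mem_map, Finset.mem_toRight, Fin.valEmbedding_apply]
  constructor
  · rintro ⟨x, hx, rfl⟩
    exact ⟨x.2, Finset.mem_toRight.mp hx⟩
  · rintro ⟨h, hx⟩
    exact ⟨⟨a, h⟩, Finset.mem_toRight.mpr hx, rfl⟩

lemma Sof_subset (T : Finset ((conePath k).E)) : Sof T ⊆ Finset.range k := by
  intro a ha
  obtain ⟨h, -⟩ := mem_Sof.mp ha
  exact Finset.mem_range.mpr h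

lemma Pof_subset (T : Finset ((conePath k).E)) : Pof T ⊆ Finset.range (k-1) := by
  intro a ha
  obtain ⟨h, -⟩ := mem_Pof.mp ha
  exact Finset.mem_range.mpr h

lemma card_Sof_Pof (T : Finset ((conePath k).E)) :
    (Sof T).card + (Pof T).card = T.card := by
  unfold Sof Pof
  rw [Finset.card_map, Finset.card_map]
  exact Finset.card_toLeft_add_card_toRight (u := T)

/-- an edge joining `v` and `w` that lies in `T` gives one-step reachability -/
lemma reach_of_edge {T : Finset ((conePath k).E)} {e : (conePath k).E}
    (he : e ∈ T) : (conePath k).Reach T ((conePath k).head e) ((conePath k).tail e) :=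
  Relation.EqvGen.rel _ _ ⟨e, he, Or.inl ⟨rfl, rfl⟩⟩

lemma head_inl (i : Fin k) : (conePath k).head (Sum.inl i) = (0 : Fin (k+1)) := rfl
lemma tail_inl (i : Fin k) :
    (conePath k).tail (Sum.inl i) = (⟨i.1 + 1, by omega⟩ : Fin (k+1)) := rfl
lemma head_inr (j : Fin (k-1)) :
    (conePath k).head (Sum.inr j) = (⟨j.1 + 1, by omega⟩ : Fin (k+1)) := rfl
lemma tail_inr (j : Fin (k-1)) :
    (conePath k).tail (Sum.inr j) = (⟨j.1 + 2, by omega⟩ : Fin (k+1)) := rfl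

/-- consecutive vertices within one block are reachable -/
lemma reach_within_block {T : Finset ((conePath k).E)} :
    ∀ b : ℕ, ∀ a : ℕ, (hab : a ≤ b) → (hb : b < k) →
      fcnt (Pof T) a = fcnt (Pof T) b →
      (conePath k).Reach T (⟨a + 1, by omega⟩ : Fin (k+1)) (⟨b + 1, by omega⟩ : Fin (k+1)) := by
  intro b
  induction b with
  | zero =>
    intro a ha hb _
    have : a = 0 := by omega
    subst this
    exact Relation.EqvGen.refl _
  | succ c ih =>
    intro a ha hb hf
    rcases Nat.lt_or_ge a (c+1) with h | h
    · have h1 : fcnt (Pof T) a ≤ fcnt (Pof T) c := fcnt_mono _ (by omega)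
      have h2 : fcnt (Pof T) c ≤ fcnt (Pof T) (c+1) := fcnt_mono _ (by omega)
      have h3 : fcnt (Pof T) c = fcnt (Pof T) (c+1) := by omega
      have hcP : c ∈ Pof T := by
        by_contra hc
        have := fcnt_succ_of_not_mem (P := Pof T) hc
        omega
      obtain ⟨hck, hmem⟩ := mem_Pof.mp hcP
      have hedge := reach_of_edge hmem
      rw [head_inr, tail_inr] at hedge
      have hreach : (conePath k).Reach T (⟨a + 1, by omega⟩ : Fin (k+1)) (⟨c + 1, by omega⟩ : Fin (k+1)) :=
        ih a (by omega) (by omega) (by omega)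
      exact Relation.EqvGen.trans _ _ _ hreach hedge
    · have : a = c + 1 := by omega
      subst this
      exact Relation.EqvGen.refl _

/-- if the fiber of vertex `i`'s block contains a spoke, vertex `i+1` is
reachable from the cone point. -/
lemma reach_zero_of_spoke {T : Finset ((conePath k).E)} {i i' : ℕ}
    (hi : i < k) (hi' : i' ∈ Sof T) (hf : fcnt (Pof T) i' = fcnt (Pof T) i) :
    (conePath k).Reach T (0 : Fin (k+1)) (⟨i + 1, by omega⟩ : Fin (k+1)) := by
  obtain ⟨hik, hmem⟩ := mem_Sof.mp hi'
  have hedge := reach_of_edge hmem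
  rw [head_inl, tail_inl] at hedge
  rcases Nat.le_total i' i with h | h
  · exact Relation.EqvGen.trans _ _ _ hedge (reach_within_block i i' h hi hf)
  · exact Relation.EqvGen.trans _ _ _ hedge
      (Relation.EqvGen.symm _ _ (reach_within_block i' i h hik hf.symm))

/-- invariant: if no spoke lands in the block of `i`, reachability from the
cone point preserves being outside that block. -/
lemma not_reach_of_no_spoke {T : Finset ((conePath k).E)} {i : ℕ} (hi : i < k)
    (hno : ∀ i' ∈ Sof T, fcnt (Pof T) i' ≠ fcnt (Pof T) i) :
    ¬ (conePath k).Reach T (0 : Fin (k+1)) (⟨i + 1, by omega⟩ : Fin (k+1)) := by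
  set Q : Fin (k+1) → Prop :=
    fun v => v.1 = 0 ∨ fcnt (Pof T) (v.1 - 1) ≠ fcnt (Pof T) i with hQ
  have key : ∀ v w : Fin (k+1), (conePath k).edgeRel T v w → (Q v ↔ Q w) := by
    rintro v w ⟨e, he, hvw⟩
    have main : ∀ x y : Fin (k+1),
        (conePath k).head e = x → (conePath k).tail e = y → (Q x ↔ Q y) := by
      intro x y hx hy
      cases e with
      | inl s =>
        rw [head_inl] at hx
        rw [tail_inl] at hy
        have hs : s.1 ∈ Sof T := mem_Sof.mpr ⟨s.2, he⟩
        have h1 : Q x := by rw [← hx]; exact Or.inl rfl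
        have h2 : Q y := by
          rw [← hy]
          exact Or.inr (by simpa using hno s.1 hs)
        simp [h1, h2]
      | inr p =>
        rw [head_inr] at hx
        rw [tail_inr] at hy
        have hp : p.1 ∈ Pof T := mem_Pof.mpr ⟨p.2, he⟩
        have hstep : fcnt (Pof T) (p.1 + 1) = fcnt (Pof T) p.1 := fcnt_succ_of_mem hp
        rw [← hx, ← hy]
        simp only [hQ]
        simp only [Nat.add_sub_cancel]
        have e2 : p.1 + 2 - 1 = p.1 + 1 := by omega
        rw [e2, hstep]
        simp
    rcases hvw with ⟨hx, hy⟩ | ⟨hx, hy⟩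
    · exact main v w hx hy
    · exact (main w v hx hy).symm
  intro hreach
  have hinv : ∀ v w : Fin (k+1), (conePath k).Reach T v w → (Q v ↔ Q w) := by
    intro v w h
    induction h with
    | rel x y h => exact key x y h
    | refl x => exact Iff.rfl
    | symm x y h ih => exact ih.symm
    | trans x y z h1 h2 ih1 ih2 => exact ih1.trans ih2
  have h0 : Q (0 : Fin (k+1)) := Or.inl rfl
  have hQi := (hinv _ _ hreach).mp h0
  rcases hQi with h | h
  · simp at h
  · simp only [Nat.add_sub_cancel] at h
    exact h rfl

lemma card_image_fcnt {T : Finset ((conePath k).E)} (hk : 1 ≤ k) :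
    ((Finset.range k).image (fcnt (Pof T))).card = k - (Pof T).card := by
  rw [fcnt_image_range hk, Finset.card_range,
    fcnt_of_subset_range (Pof_subset T)]
  have := Finset.card_le_card (Pof_subset T)
  rw [Finset.card_range] at this
  omega

lemma sum_fibers {T : Finset ((conePath k).E)} :
    ∑ b ∈ (Finset.range k).image (fcnt (Pof T)),
      ((Sof T).filter (fun i' => fcnt (Pof T) i' = b)).card = (Sof T).card :=
  (Finset.card_eq_sum_card_fiberwise (fun x hx =>
    Finset.mem_image.mpr ⟨x, Sof_subset T hx, rfl⟩)).symm

lemma spanning_iff_good (hk : 1 ≤ k) (T : Finset ((conePath k).E)) :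
    (conePath k).IsSpanningTree T ↔ (Sof T, Pof T) ∈ goodSet k := by
  rw [mem_goodSet]
  constructor
  · rintro ⟨hconn, hcard⟩
    refine ⟨Sof_subset T, Pof_subset T, ?_⟩
    -- every fiber is nonempty
    have hfib : ∀ i < k, 1 ≤ ((Sof T).filter (fun i' => fcnt (Pof T) i' = fcnt (Pof T) i)).card := by
      intro i hi
      rcases ((Sof T).filter (fun i' => fcnt (Pof T) i' = fcnt (Pof T) i)).eq_empty_or_nonempty with hempty | hne
      · exfalso
        rw [Finset.filter_eq_empty_iff] at hempty
        exact not_reach_of_no_spoke hi (fun i' hi' => hempty hi')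
          (hconn (0 : Fin (k+1)) (⟨i+1, by omega⟩ : Fin (k+1)))
      · exact Finset.card_pos.mpr hne
    -- cardinalities
    have hTcard : T.card = k := by
      have : Fintype.card ((conePath k).V) = k + 1 := by
        show Fintype.card (Fin (k+1)) = k + 1
        simp
      omega
    -- each fiber has card exactly one
    have himg := card_image_fcnt (T := T) hk
    have hsum := sum_fibers (T := T)
    have hPle : (Pof T).card ≤ k - 1 := by
      have := Finset.card_le_card (Pof_subset T)
      rwa [Finset.card_range] at this
    have hS : (Sof T).card = k - (Pof T).card := by
      have := card_Sof_Pof T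
      omega
    have hone : ∀ b ∈ (Finset.range k).image (fcnt (Pof T)),
        ((Sof T).filter (fun i' => fcnt (Pof T) i' = b)).card = 1 := by
      have hle : ∀ b ∈ (Finset.range k).image (fcnt (Pof T)),
          1 ≤ ((Sof T).filter (fun i' => fcnt (Pof T) i' = b)).card := by
        intro b hb
        obtain ⟨i, hi, rfl⟩ := Finset.mem_image.mp hb
        exact hfib i (Finset.mem_range.mp hi)
      have heq : ∑ b ∈ (Finset.range k).image (fcnt (Pof T)), (1:ℕ) =
          ∑ b ∈ (Finset.range k).image (fcnt (Pof T)),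
            ((Sof T).filter (fun i' => fcnt (Pof T) i' = b)).card := by
        rw [hsum, Finset.sum_const, smul_eq_mul, mul_one, himg, hS]
      intro b hb
      have := (Finset.sum_eq_sum_iff_of_le hle).mp heq b hb
      omega
    intro i hi
    exact hone (fcnt (Pof T) i)
      (Finset.mem_image.mpr ⟨i, hi, rfl⟩)
  · rintro ⟨-, -, hg⟩
    constructor
    · -- connectivity
      have hreach0 : ∀ v : Fin (k+1), (conePath k).Reach T (0 : Fin (k+1)) v := by
        intro v
        rcases Nat.eq_zero_or_pos v.1 with h | h
        · have : v = (0 : Fin (k+1)) := by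
            apply Fin.ext
            simpa using h
          rw [this]
          exact Relation.EqvGen.refl _
        · have hvk : v.1 - 1 < k := by omega
          have hone := hg (v.1 - 1) (Finset.mem_range.mpr hvk)
          have hnonempty : ((Sof T).filter
              (fun i' => fcnt (Pof T) i' = fcnt (Pof T) (v.1 - 1))).Nonempty := by
            rw [← Finset.card_pos, hone]
            omega
          obtain ⟨i', hi'⟩ := hnonempty
          rw [Finset.mem_filter] at hi'
          have := reach_zero_of_spoke hvk hi'.1 hi'.2
          have hv : v = (⟨v.1 - 1 + 1, by omega⟩ : Fin (k+1)) := by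
            apply Fin.ext
            simp
            omega
          rwa [← hv] at this
      intro v w
      exact Relation.EqvGen.trans _ _ _
        (Relation.EqvGen.symm _ _ (hreach0 v)) (hreach0 w)
    · -- cardinality
      have himg := card_image_fcnt (T := T) hk
      have hsum := sum_fibers (T := T)
      have hone : ∑ b ∈ (Finset.range k).image (fcnt (Pof T)),
          ((Sof T).filter (fun i' => fcnt (Pof T) i' = b)).card =
          ((Finset.range k).image (fcnt (Pof T))).card := by
        rw [Finset.card_eq_sum_ones]
        apply Finset.sum_congr rfl
        intro b hb
        obtain ⟨i, hi, rfl⟩ := Finset.mem_image.mp hb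
        exact hg i hi
      have hPle : (Pof T).card ≤ k - 1 := by
        have := Finset.card_le_card (Pof_subset T)
        rwa [Finset.card_range] at this
      have hST := card_Sof_Pof T
      have : Fintype.card ((conePath k).V) = k + 1 := by
        show Fintype.card (Fin (k+1)) = k + 1
        simp
      omega

/-- reconstruct the edge set from the pair of index sets -/
def Tof (q : Finset ℕ × Finset ℕ) : Finset (Fin k ⊕ Fin (k-1)) :=
  (Finset.univ.filter fun i : Fin k => i.1 ∈ q.1).disjSum
    (Finset.univ.filter fun j : Fin (k-1) => j.1 ∈ q.2)

lemma mem_Tof_inl {q : Finset ℕ × Finset ℕ} {i : Fin k} :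
    (Sum.inl i : (conePath k).E) ∈ Tof q ↔ i.1 ∈ q.1 := by
  simp [Tof, Finset.inl_mem_disjSum]

lemma mem_Tof_inr {q : Finset ℕ × Finset ℕ} {j : Fin (k-1)} :
    (Sum.inr j : (conePath k).E) ∈ Tof q ↔ j.1 ∈ q.2 := by
  simp [Tof, Finset.inr_mem_disjSum]

lemma Sof_Tof {q : Finset ℕ × Finset ℕ} (hq : q.1 ⊆ Finset.range k) :
    Sof (Tof (k := k) q) = q.1 := by
  ext a
  refine mem_Sof.trans ?_
  constructor
  · rintro ⟨h, hmem⟩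
    exact mem_Tof_inl.mp hmem
  · intro ha
    have hak : a < k := Finset.mem_range.mp (hq ha)
    exact ⟨hak, mem_Tof_inl.mpr ha⟩

lemma Pof_Tof {q : Finset ℕ × Finset ℕ} (hq : q.2 ⊆ Finset.range (k-1)) :
    Pof (Tof (k := k) q) = q.2 := by
  ext a
  refine mem_Pof.trans ?_
  constructor
  · rintro ⟨h, hmem⟩
    exact mem_Tof_inr.mp hmem
  · intro ha
    have hak : a < k - 1 := Finset.mem_range.mp (hq ha)
    exact ⟨hak, mem_Tof_inr.mpr ha⟩

lemma Tof_Sof (T : Finset ((conePath k).E)) : Tof (k := k) (Sof T, Pof T) = T := by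
  ext e
  cases e with
  | inl i =>
    rw [mem_Tof_inl]
    show i.1 ∈ Sof T ↔ _
    rw [mem_Sof]
    constructor
    · rintro ⟨h, hmem⟩
      exact hmem
    · intro h
      exact ⟨i.2, h⟩
  | inr j =>
    rw [mem_Tof_inr]
    show j.1 ∈ Pof T ↔ _
    rw [mem_Pof]
    constructor
    · rintro ⟨h, hmem⟩
      exact hmem
    · intro h
      exact ⟨j.2, h⟩

end GraphSide

/-- The number of spanning trees of the cone over the path on `k` vertices is the
`2k`-th Fibonacci number. -/
theorem conePath_spanningTree_count (k : ℕ) (hk : 1 ≤ k) :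
    Nat.card {T : Finset (conePath k).E // (conePath k).IsSpanningTree T} =
      Nat.fib (2 * k) := by
  classical
  rw [Nat.card_eq_fintype_card, Fintype.card_subtype]
  rw [← (ConePathAux.counts hk).1]
  apply Finset.card_bij' (fun T _ => (Sof T, Pof T)) (fun q _ => Tof q)
  · intro T hT
    rw [Finset.mem_filter] at hT
    exact (spanning_iff_good hk T).mp hT.2
  · intro q hq
    apply Finset.mem_filter.mpr
    refine ⟨Finset.mem_univ _, ?_⟩
    rw [ConePathAux.mem_goodSet] at hq
    rw [spanning_iff_good hk (Tof q), ConePathAux.mem_goodSet, Sof_Tof hq.1, Pof_Tof hq.2.1]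
    exact hq
  · intro T hT
    exact Tof_Sof T
  · intro q hq
    rw [ConePathAux.mem_goodSet] at hq
    rw [Sof_Tof hq.1, Pof_Tof hq.2.1]
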